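/- Let X, Y be Banach spaces, C ⊆ Y a closed convex pointed cone with nonempty interior, f : X → Y. If x̄ is the unique minimizer of x ↦ D_{−C}(f(x) − f(x̄)) over X, then x̄ is an efficient solution of (X, f). -/
import Mathlib


/-- If `xbar` is the unique minimizer of `x ↦ D_{-C}(f x - f xbar)`, then
`xbar` is an efficient solution of `(X, f)`. -/
theorem efficient_of_unique_min_orientedDist
    {X Y : Type*} [NormedAddCommGroup X] [NormedSpace ℝ X] [CompleteSpace X]
    [NormedAddCommGroup Y] [NormedSpace ℝ Y] [CompleteSpace Y]
    (C : Set Y) (hCclosed : IsClosed C) (hCconv : Convex ℝ C)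
    (hCcone : ∀ t : ℝ, 0 ≤ t → ∀ y ∈ C, t • y ∈ C)
    (hCpointed : C ∩ (-C) = {0}) (hCint : (interior C).Nonempty)
    (f : X → Y) (xbar : X)
    (huniq : ∀ x : X, x ≠ xbar →
      Metric.infDist (f xbar - f xbar) (-C) - Metric.infDist (f xbar - f xbar) ((-C)ᶜ) <
      Metric.infDist (f x - f xbar) (-C) - Metric.infDist (f x - f xbar) ((-C)ᶜ)) :
    {y | ∃ x, y = f x - f xbar} ∩ (-C) = {0} := by
  -- 0 ∈ C
  obtain ⟨c0, hc0⟩ := hCint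
  have hc0C : c0 ∈ C := interior_subset hc0
  have h0C : (0 : Y) ∈ C := by
    have := hCcone 0 le_rfl c0 hc0C
    simpa using this
  have h0nC : (0 : Y) ∈ -C := by simpa using h0C
  -- C + C ⊆ C
  have hadd : ∀ a b : Y, a ∈ C → b ∈ C → a + b ∈ C := by
    intro a b ha hb
    have hmid : (1/2 : ℝ) • a + (1/2 : ℝ) • b ∈ C :=
      hCconv ha hb (by norm_num) (by norm_num) (by norm_num)
    have := hCcone 2 (by norm_num) _ hmid
    have h2 : (2 : ℝ) • ((1/2 : ℝ) • a + (1/2 : ℝ) • b) = a + b := by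
      rw [smul_add, smul_smul, smul_smul]; norm_num
    rwa [h2] at this
  ext y
  constructor
  · rintro ⟨⟨x, rfl⟩, hy⟩
    by_cases hx : x = xbar
    · simp [hx]
    · exfalso
      set y := f x - f xbar with hy_def
      have h := huniq x hx
      have h1 : Metric.infDist (f xbar - f xbar) (-C) = 0 :=
        Metric.infDist_zero_of_mem (by simpa using h0nC)
      have h2 : Metric.infDist y (-C) = 0 := Metric.infDist_zero_of_mem hy
      rw [h1, h2, sub_self, zero_sub, zero_sub, neg_lt_neg_iff] at h
      -- h : infDist 0 ((-C)ᶜ) > infDist y ((-C)ᶜ) is impossible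
      rcases Set.eq_empty_or_nonempty ((-C)ᶜ) with hemp | hne
      · rw [hemp] at h; simp [Metric.infDist_empty] at h
      · obtain ⟨z, hz, hdz⟩ := (Metric.infDist_lt_iff hne).mp h
        have hzy : z - y ∈ ((-C)ᶜ) := by
          intro hmem
          apply hz
          have : -(z - y) + -y ∈ C := hadd _ _ (by simpa using hmem) (by simpa using hy)
          simp only [Set.mem_neg]
          convert this using 1
          abel
        have h0le : Metric.infDist (0 : Y) ((-C)ᶜ) ≤ dist (0 : Y) (z - y) :=
          Metric.infDist_le_dist_of_mem hzy
        have heq : dist (0 : Y) (z - y) = dist y z := by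
          simp [dist_eq_norm, norm_sub_rev]
        rw [heq] at h0le
        exact absurd hdz (not_lt.mpr h0le)
  · rintro rfl
    exact ⟨⟨xbar, by simp⟩, h0nC⟩
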